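/- Let m ≥ 1 and let x_1, …, x_m be invertible indeterminates. For α ∈ ℤ^m define the m×m matrices M and N by M_{i,1} = x_i^{α_i−i+1} and M_{i,j} = x_i^{α_i−i+j} + x_i^{α_i−i−j+2} for 2 ≤ j ≤ m, and N_{i,j} = x_i^{α_i−i+j} − x_i^{α_i−i−j} for 1 ≤ i, j ≤ m. Then in the Laurent polynomial ring ℤ[x_1^{±1}, …, x_m^{±1}] one has det M = ∏_{1≤i<j≤m}(1 − x_i/x_j) · ∏_{1≤r<s≤m}(1 − 1/(x_r x_s)) · x^α and det N = ∏_{1≤i<j≤m}(1 − x_i/x_j) · ∏_{1≤r≤s≤m}(1 − 1/(x_r x_s)) · x^α. -/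

import Mathlib

open scoped BigOperators

noncomputable section

/-- Integral weights of rank `m`, identified with `ℤ^m`. -/
abbrev Wt (m : ℕ) := Fin m → ℤ

/-- Rational weights of rank `m` (needed for the half-integral `ρ` of type `B`). -/
abbrev QWt (m : ℕ) := Fin m → ℚ

/-- Coercion of an integral weight to a rational weight. -/
def castWt {m : ℕ} (β : Wt m) : QWt m := fun i => (β i : ℚ)

/-- The standard basis vector `ε_i` of `ℤ^m`. -/
def eps {m : ℕ} (i : Fin m) : Wt m := fun j => if j = i then 1 else 0

/-- `ρ_m = (m, m-1, ..., 1)`. -/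
def rhoZ (m : ℕ) : Wt m := fun i => (m : ℤ) - (i : ℕ)

/-- `κ_m = (1, ..., 1)`. -/
def kappa (m : ℕ) : Wt m := fun _ => 1

/-- A partition of length `m`: a weakly decreasing element of `ℕ^m` (written in `ℤ^m`). -/
def IsPart {m : ℕ} (lam : Wt m) : Prop := Antitone lam ∧ ∀ i, 0 ≤ lam i

/-- `|λ| = λ_1 + ⋯ + λ_m`. -/
def wtSum {m : ℕ} (lam : Wt m) : ℤ := ∑ i, lam i

/-- The conjugate partition, regarded as a partition of length `n`:
`λ'_j = #{i : λ_i ≥ j}` (with `j` one-based). -/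
def conj {m : ℕ} (n : ℕ) (lam : Wt m) : Wt n :=
  fun j => ((Finset.univ.filter (fun i : Fin m => ((j : ℕ) : ℤ) < lam i)).card : ℤ)

/-- The permutation action of `S_m` on `ℤ^m`. -/
def pact {m : ℕ} (σ : Equiv.Perm (Fin m)) (β : Wt m) : Wt m := β ∘ σ.symm

/-- The permutation action of `S_m` on `ℚ^m`. -/
def qpact {m : ℕ} (σ : Equiv.Perm (Fin m)) (β : QWt m) : QWt m := β ∘ σ.symm

/-- The dot action `σ ∘ α = σ(α + ρ_m) - ρ_m`. -/
def dotAct {m : ℕ} (σ : Equiv.Perm (Fin m)) (α : Wt m) : Wt m :=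
  pact σ (α + rhoZ m) - rhoZ m

/-- The three root-system types considered in the paper. -/
inductive RT | B | C | D
deriving DecidableEq

/-- The action of a signed permutation `(σ, ε)` on `ℚ^m`: the hyperoctahedral group
`W_{B_m} = W_{C_m}` consists of all such pairs. -/
def sact {m : ℕ} (σ : Equiv.Perm (Fin m)) (ε : Fin m → Bool) (β : QWt m) : QWt m :=
  fun i => (if ε i then -1 else 1) * β (σ.symm i)

/-- `(-1)^{l(w)}` for a signed permutation `w = (σ, ε)`: the sign character of the
hyperoctahedral group, which takes value `-1` on each Coxeter generator. -/
def ssign {m : ℕ} (σ : Equiv.Perm (Fin m)) (ε : Fin m → Bool) : ℤ :=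
  (Equiv.Perm.sign σ : ℤ) * ∏ i, (if ε i then -1 else 1)

/-- Which signed permutations belong to the Weyl group of type `g`: for `B` and `C` all of
them, for `D` only those changing an even number of signs. -/
def allowed (g : RT) {m : ℕ} (ε : Fin m → Bool) : Prop :=
  g = RT.D → (∏ i, (if ε i then (-1 : ℤ) else 1)) = 1

instance (g : RT) {m : ℕ} : DecidablePred (allowed g (m := m)) := by
  unfold allowed; infer_instance

/-- The Laurent polynomial ring `ℤ[x_1^{±1/2}, ..., x_m^{±1/2}]` (allowing all rational
exponents), realized as the group algebra of `ℚ^m`. -/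
abbrev LQ (m : ℕ) := AddMonoidAlgebra ℤ (QWt m)

/-- The monomial `x^β`. -/
def XQ {m : ℕ} (β : QWt m) : LQ m := AddMonoidAlgebra.single β 1

instance {m : ℕ} : IsDomain (LQ m) := NoZeroDivisors.to_isDomain _

/-- The fraction field of the Laurent polynomial ring, in which Schur functions live. -/
abbrev KK (m : ℕ) := FractionRing (LQ m)

def toK {m : ℕ} (p : LQ m) : KK m := algebraMap (LQ m) (KK m) p

/-- The half-sum of positive roots: `ρ_B = ρ_m - (1/2,…,1/2)`, `ρ_C = ρ_m`,
`ρ_D = ρ_m - (1,…,1)`. -/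
def rhoG (g : RT) (m : ℕ) : QWt m :=
  match g with
  | RT.B => fun i => ((m : ℚ) - (i : ℕ)) - 1/2
  | RT.C => fun i => (m : ℚ) - (i : ℕ)
  | RT.D => fun i => ((m : ℚ) - (i : ℕ)) - 1

/-- `a_β = Σ_{w ∈ W_g} (-1)^{l(w)} x^{w(β)}`. -/
def aalt (g : RT) {m : ℕ} (β : QWt m) : LQ m :=
  ∑ σ : Equiv.Perm (Fin m), ∑ ε ∈ Finset.univ.filter (allowed g),
    ssign σ ε • XQ (sact σ ε β)

/-- The Schur function `s_ν^g = a_{ν+ρ_g} / a_{ρ_g}`. -/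
def SchurF (g : RT) {m : ℕ} (ν : QWt m) : KK m :=
  toK (aalt g (ν + rhoG g m)) / toK (aalt g (rhoG g m))

/-- The one-row weight `(k, 0, …, 0)`. -/
def rowWt (m : ℕ) (k : ℤ) : QWt m := fun i => if (i : ℕ) = 0 then (k : ℚ) else 0

/-- The one-column weight `(1^p, 0^{m-p})`. -/
def colWt (m : ℕ) (p : ℤ) : QWt m := fun i => if ((i : ℕ) : ℤ) < p then 1 else 0

/-- `h_k^g = s_{(k,0,…,0)}^g` for `k ≥ 0`, and `0` for `k < 0`. -/
def hF (g : RT) (m : ℕ) (k : ℤ) : KK m := if 0 ≤ k then SchurF g (rowWt m k) else 0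

/-- `H_k^g = h_k^g + h_{k-2}^g + ⋯ + h_{k mod 2}^g` for `k ≥ 0`, and `0` for `k < 0`. -/
def HF (g : RT) (m : ℕ) (k : ℤ) : KK m :=
  if 0 ≤ k then ∑ j ∈ Finset.range (k.toNat / 2 + 1), hF g m (k - 2 * j) else 0

/-- `e_p^g = s^g_{(1^p,0^{m-p})}` for `0 ≤ p ≤ m`, `e_p^g = e^g_{2m-p}` for `m < p ≤ 2m`,
and `0` otherwise. -/
def eF (g : RT) (m : ℕ) (p : ℤ) : KK m :=
  if 0 ≤ p ∧ p ≤ (m : ℤ) then SchurF g (colWt m p)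
  else if (m : ℤ) < p ∧ p ≤ 2 * m then SchurF g (colWt m (2 * m - p))
  else 0

/-- `E_k^g = e_k^g + e_{k-2}^g + ⋯ + e_{k mod 2}^g` for `k ≥ 0`, and `0` for `k < 0`. -/
def EF (g : RT) (m : ℕ) (k : ℤ) : KK m :=
  if 0 ≤ k then ∑ j ∈ Finset.range (k.toNat / 2 + 1), eF g m (k - 2 * j) else 0

/-- The `m × m` determinant `u_α^g` (in the one-row characters `h^g`). -/
def uDet (g : RT) {m : ℕ} (α : Wt m) : KK m :=
  Matrix.det (Matrix.of fun i j : Fin m =>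
    if (j : ℕ) = 0 then hF g m (α i - (i : ℕ))
    else hF g m (α i - (i : ℕ) + (j : ℕ)) + hF g m (α i - (i : ℕ) - (j : ℕ)))

/-- The `n × n` determinant `v_β^g` (in the one-column characters `e^g` of rank `m`). -/
def vDet (g : RT) (m : ℕ) {n : ℕ} (β : Wt n) : KK m :=
  Matrix.det (Matrix.of fun i j : Fin n =>
    if (j : ℕ) = 0 then eF g m (β i - (i : ℕ))
    else eF g m (β i - (i : ℕ) + (j : ℕ)) + eF g m (β i - (i : ℕ) - (j : ℕ)))

/-- `h_α^g = h^g_{α_1} ⋯ h^g_{α_m}` (and similarly for arbitrary index length). -/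
def hProd (g : RT) (m : ℕ) {n : ℕ} (α : Wt n) : KK m := ∏ i, hF g m (α i)

def HProd (g : RT) (m : ℕ) {n : ℕ} (α : Wt n) : KK m := ∏ i, HF g m (α i)

def eProd (g : RT) (m : ℕ) {n : ℕ} (α : Wt n) : KK m := ∏ i, eF g m (α i)

def EProd (g : RT) (m : ℕ) {n : ℕ} (α : Wt n) : KK m := ∏ i, EF g m (α i)

/-- The Laurent polynomial ring `ℤ[x_1^{±1}, ..., x_m^{±1}]`, realized as the group
algebra of `ℤ^m`. -/
abbrev LZ (m : ℕ) := AddMonoidAlgebra ℤ (Wt m)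

/-- The monomial `x^β`. -/
def XZ {m : ℕ} (β : Wt m) : LZ m := AddMonoidAlgebra.single β 1

/-- `φ_m = ∏_{1≤i<j≤m} (1 - x_i/x_j) · ∏_{1≤r<s≤m} (1 - 1/(x_r x_s))`; its coefficients
are the function `a` (resp. `f_{q=1}` up to expansion conventions). -/
def phiSmall (m : ℕ) : LZ m :=
  (∏ p ∈ Finset.univ.filter (fun p : Fin m × Fin m => p.1 < p.2),
      (1 - XZ (eps p.1 - eps p.2))) *
  (∏ p ∈ Finset.univ.filter (fun p : Fin m × Fin m => p.1 < p.2),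
      (1 - XZ (-(eps p.1 + eps p.2))))

/-- `Φ_m = ∏_{1≤i<j≤m} (1 - x_i/x_j) · ∏_{1≤r≤s≤m} (1 - 1/(x_r x_s))`. -/
def phiBig (m : ℕ) : LZ m :=
  (∏ p ∈ Finset.univ.filter (fun p : Fin m × Fin m => p.1 < p.2),
      (1 - XZ (eps p.1 - eps p.2))) *
  (∏ p ∈ Finset.univ.filter (fun p : Fin m × Fin m => p.1 ≤ p.2),
      (1 - XZ (-(eps p.1 + eps p.2))))

/-- The coefficient `a(γ)` of `x^γ` in `φ_m`. -/
def coeffSmall (m : ℕ) (γ : Wt m) : ℤ := (phiSmall m).coeff γ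

/-- The coefficient `A(γ)` of `x^γ` in `Φ_m`. -/
def coeffBig (m : ℕ) (γ : Wt m) : ℤ := (phiBig m).coeff γ

/-- The generic `q`-partition function attached to a finite family `v` of vectors:
the coefficient of `q^d` counts the families `(n_i)` of nonnegative integers with
`Σ n_i = d` and `Σ n_i v_i = β`.  This encodes the coefficient of `x^β` in the formal
series expansion of `∏_i (1 - q x^{v_i})^{-1}` as a power series in `q`. -/
def PqPS {m : ℕ} {ι : Type} [Fintype ι] (v : ι → Wt m) (β : QWt m) : PowerSeries ℤ :=
  PowerSeries.mk fun d =>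
    (Nat.card {n : ι → ℕ // (∑ i, n i) = d ∧ castWt (∑ i, (n i : ℤ) • v i) = β} : ℤ)

/-- The specialization at `q = 1` of `PqPS`: the number of ways to write `β` as a
nonnegative integral combination of the vectors `v_i`. -/
def POne {m : ℕ} {ι : Type} [Fintype ι] (v : ι → Wt m) (β : Wt m) : ℤ :=
  (Nat.card {n : ι → ℕ // (∑ i, (n i : ℤ) • v i) = β} : ℤ)

/-- Index type for the pairs `1 ≤ i < j ≤ m`. -/
abbrev IdxLT (m : ℕ) := {p : Fin m × Fin m // p.1 < p.2}

/-- Index type for the pairs `1 ≤ i ≤ j ≤ m`. -/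
abbrev IdxLE (m : ℕ) := {p : Fin m × Fin m // p.1 ≤ p.2}

/-- The positive roots `ε_i - ε_j` (`i < j`) of type `A_m`. -/
def rootsA (m : ℕ) : IdxLT m → Wt m := fun p => eps p.1.1 - eps p.1.2

/-- The positive roots of type `B_m`. -/
def rootsB (m : ℕ) : IdxLT m ⊕ IdxLT m ⊕ Fin m → Wt m
  | .inl p => eps p.1.1 - eps p.1.2
  | .inr (.inl p) => eps p.1.1 + eps p.1.2
  | .inr (.inr i) => eps i

/-- The positive roots of type `C_m` (note `2ε_i = ε_i + ε_i`). -/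
def rootsC (m : ℕ) : IdxLT m ⊕ IdxLE m → Wt m
  | .inl p => eps p.1.1 - eps p.1.2
  | .inr p => eps p.1.1 + eps p.1.2

/-- The positive roots of type `D_m`. -/
def rootsD (m : ℕ) : IdxLT m ⊕ IdxLT m → Wt m
  | .inl p => eps p.1.1 - eps p.1.2
  | .inr p => eps p.1.1 + eps p.1.2

/-- The vectors `ε_i - ε_j` (`i < j`) and `-(ε_r + ε_s)` (`r < s`), whose `q`-partition
function is `f_q`. -/
def vfSmall (m : ℕ) : IdxLT m ⊕ IdxLT m → Wt m
  | .inl p => eps p.1.1 - eps p.1.2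
  | .inr p => -(eps p.1.1 + eps p.1.2)

/-- The vectors `ε_i - ε_j` (`i < j`) and `-(ε_r + ε_s)` (`r ≤ s`), whose `q`-partition
function is `F_q`. -/
def vfBig (m : ℕ) : IdxLT m ⊕ IdxLE m → Wt m
  | .inl p => eps p.1.1 - eps p.1.2
  | .inr p => -(eps p.1.1 + eps p.1.2)

/-- `f_q`. -/
def fq {m : ℕ} (β : Wt m) : PowerSeries ℤ := PqPS (vfSmall m) (castWt β)

/-- `F_q`. -/
def Fq {m : ℕ} (β : Wt m) : PowerSeries ℤ := PqPS (vfBig m) (castWt β)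

/-- The `q`-analogue of Kostant's partition function, type `A_m`. -/
def PqA {m : ℕ} (β : QWt m) : PowerSeries ℤ := PqPS (rootsA m) β

/-- The `q`-analogue of Kostant's partition function, types `B_m`, `C_m`, `D_m`. -/
def PqG (g : RT) {m : ℕ} (β : QWt m) : PowerSeries ℤ :=
  match g with
  | RT.B => PqPS (rootsB m) β
  | RT.C => PqPS (rootsC m) β
  | RT.D => PqPS (rootsD m) β

/-- The Kostka–Foulkes polynomial
`K^g_{λ,μ}(q) = Σ_{w ∈ W_g} (-1)^{l(w)} P_q^g(w(λ+ρ_g) - (μ+ρ_g))`. -/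
def KF (g : RT) {m : ℕ} (lam mu : QWt m) : PowerSeries ℤ :=
  ∑ σ : Equiv.Perm (Fin m), ∑ ε ∈ Finset.univ.filter (allowed g),
    ssign σ ε • PqG g (sact σ ε (lam + rhoG g m) - (mu + rhoG g m))

/-- The Kostka–Foulkes polynomial of type `A_m`,
`K^{A_m}_{λ,γ}(q) = Σ_{σ ∈ S_m} (-1)^{l(σ)} P_q^{A_m}(σ(λ+ρ_m) - (γ+ρ_m))`,
defined for arbitrary `γ ∈ ℤ^m`. -/
def KFA {m : ℕ} (lam gamma : Wt m) : PowerSeries ℤ :=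
  ∑ σ : Equiv.Perm (Fin m),
    (Equiv.Perm.sign σ : ℤ) • PqA (castWt (pact σ (lam + rhoZ m) - (gamma + rhoZ m)))

/-- `u_{λ,μ}(q) = Σ_{σ ∈ S_m} (-1)^{l(σ)} f_q(σ(λ+ρ_m) - μ - ρ_m)`. -/
def uP {m : ℕ} (lam mu : Wt m) : PowerSeries ℤ :=
  ∑ σ : Equiv.Perm (Fin m),
    (Equiv.Perm.sign σ : ℤ) • fq (pact σ (lam + rhoZ m) - mu - rhoZ m)

/-- `U_{λ,μ}(q) = Σ_{σ ∈ S_m} (-1)^{l(σ)} F_q(σ(λ+ρ_m) - μ - ρ_m)`. -/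
def UP {m : ℕ} (lam mu : Wt m) : PowerSeries ℤ :=
  ∑ σ : Equiv.Perm (Fin m),
    (Equiv.Perm.sign σ : ℤ) • Fq (pact σ (lam + rhoZ m) - mu - rhoZ m)

/-- `f_q` specialized at `q = 1`. -/
def fOne {m : ℕ} (β : Wt m) : ℤ := POne (vfSmall m) β

/-- `F_q` specialized at `q = 1`. -/
def FOne {m : ℕ} (β : Wt m) : ℤ := POne (vfBig m) β

/-- `u_{λ,μ}(1)`. -/
def uP1 {m : ℕ} (lam mu : Wt m) : ℤ :=
  ∑ σ : Equiv.Perm (Fin m),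
    (Equiv.Perm.sign σ : ℤ) * fOne (pact σ (lam + rhoZ m) - mu - rhoZ m)

/-- `U_{λ,μ}(1)`. -/
def UP1 {m : ℕ} (lam mu : Wt m) : ℤ :=
  ∑ σ : Equiv.Perm (Fin m),
    (Equiv.Perm.sign σ : ℤ) * FOne (pact σ (lam + rhoZ m) - mu - rhoZ m)

/-- `λ̂ = (n - λ_m, …, n - λ_1)`. -/
def hatP {m : ℕ} (n : ℤ) (lam : Wt m) : Wt m := fun i => n - lam i.rev

/-- The involution `I(α_1, …, α_m) = (-α_m, …, -α_1)`. -/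
def invI {m : ℕ} (α : Wt m) : Wt m := fun i => -α i.rev

/-- `σ*`, defined by `σ*(k) = σ(m - k + 1)`. -/
def starPerm {m : ℕ} (σ : Equiv.Perm (Fin m)) : Equiv.Perm (Fin m) :=
  (Fin.revPerm).trans σ

/-- The number of ways to write `β = Σ_{1≤r≤s≤m} e_{r,s} (ε_r + ε_s)`, `e_{r,s} ∈ ℕ`. -/
def cC (m : ℕ) (β : Wt m) : ℕ :=
  Nat.card {e : IdxLE m → ℕ // (∑ p, (e p : ℤ) • (eps p.1.1 + eps p.1.2)) = β}

/-- The number of ways to write `β = Σ_{1≤r<s≤m} e_{r,s} (ε_r + ε_s)`, `e_{r,s} ∈ ℕ`. -/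
def cD (m : ℕ) (β : Wt m) : ℕ :=
  Nat.card {e : IdxLT m → ℕ // (∑ p, (e p : ℤ) • (eps p.1.1 + eps p.1.2)) = β}

/-- The set `C_k^m`. -/
def setC (m k : ℕ) : Set (Wt m) :=
  {β | (∃ e : IdxLE m → ℕ, (∑ p, (e p : ℤ) • (eps p.1.1 + eps p.1.2)) = β) ∧
       wtSum β = 2 * k}

/-- The set `D_k^m`. -/
def setD (m k : ℕ) : Set (Wt m) :=
  {β | (∃ e : IdxLT m → ℕ, (∑ p, (e p : ℤ) • (eps p.1.1 + eps p.1.2)) = β) ∧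
       wtSum β = 2 * k}


/-- monomials as units -/

def Em (m : ℕ) : Multiplicative (Wt m) →* (LZ m)ˣ where
  toFun b := ⟨AddMonoidAlgebra.single b.toAdd 1, AddMonoidAlgebra.single (-b.toAdd) 1,
    by rw [AddMonoidAlgebra.single_mul_single, add_neg_cancel, one_mul]; rfl,
    by rw [AddMonoidAlgebra.single_mul_single, neg_add_cancel, one_mul]; rfl⟩
  map_one' := by ext; rfl
  map_mul' x y := by ext; simp [AddMonoidAlgebra.single_mul_single]

lemma XZ_eq {m : ℕ} (β : Wt m) : XZ β = (Em m (Multiplicative.ofAdd β) : LZ m) := rfl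

lemma XZ_add {m : ℕ} (β γ : Wt m) : XZ (β + γ) = XZ β * XZ γ := by
  simp [XZ, AddMonoidAlgebra.single_mul_single]

lemma XZ_smul {m : ℕ} (a : ℤ) (β : Wt m) :
    XZ (a • β) = ((Em m (Multiplicative.ofAdd β)) ^ a : (LZ m)ˣ) := by
  have h : Multiplicative.ofAdd (a • β) = (Multiplicative.ofAdd β) ^ a := ofAdd_zsmul a β
  rw [XZ_eq, h, map_zpow]

lemma XZ_sum {m : ℕ} {ι : Type*} (s : Finset ι) (f : ι → Wt m) :
    XZ (∑ i ∈ s, f i) = ∏ i ∈ s, XZ (f i) := by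
  classical
  induction s using Finset.induction with
  | empty => simp [XZ]; rfl
  | @insert a s h ih => rw [Finset.sum_insert h, Finset.prod_insert h, XZ_add, ih]


section DetAux
open Polynomial
variable {R : Type*} [CommRing R]


lemma dickson_deg' [Nontrivial R] (k : ℕ) (a : R) :
    ∀ n, (dickson k a n).degree ≤ n ∧
      (n ≠ 0 → (dickson k a n).Monic ∧ (dickson k a n).natDegree = n)
  | 0 => by
    constructor
    · rw [dickson_zero]
      refine (degree_sub_le _ _).trans ?_
      have h3 : ((3 : R[X])).degree ≤ 0 := by
        have := Polynomial.degree_natCast_le (n := 3) (R := R)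
        simpa using this
      have hk : ((k : R[X])).degree ≤ 0 := Polynomial.degree_natCast_le k
      simp only [max_le_iff]
      exact ⟨h3.trans (by norm_num), hk.trans (by norm_num)⟩
    · intro h; exact absurd rfl h
  | 1 => by
    refine ⟨by simp [dickson_one, degree_X], fun _ =>
      ⟨by simp [dickson_one, monic_X], by simp [dickson_one]⟩⟩
  | n + 2 => by
    obtain ⟨hd1, _⟩ := dickson_deg' k a n
    obtain ⟨hd2, hm2⟩ := dickson_deg' k a (n + 1)
    obtain ⟨hm2', hn2⟩ := hm2 (Nat.succ_ne_zero n)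
    have hmul : (X * dickson k a (n + 1)).Monic := (monic_X).mul hm2'
    have hdmul : (X * dickson k a (n + 1)).natDegree = n + 2 := by
      rw [(monic_X).natDegree_mul hm2', natDegree_X, hn2]; omega
    have hlt : (-(C a * dickson k a n)).degree < (X * dickson k a (n + 1)).degree := by
      rw [degree_neg, degree_eq_natDegree hmul.ne_zero, hdmul]
      refine lt_of_le_of_lt (degree_mul_le _ _) ?_
      refine lt_of_le_of_lt (add_le_add degree_C_le hd1) ?_
      rw [zero_add]
      exact_mod_cast (by omega : n < n + 2)
    have hmonic : (dickson k a (n + 2)).Monic := by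
      rw [dickson_add_two, sub_eq_add_neg]
      exact hmul.add_of_left hlt
    have hdeg : (dickson k a (n + 2)).natDegree = n + 2 := by
      rw [dickson_add_two, sub_eq_add_neg, natDegree_add_eq_left_of_degree_lt hlt, hdmul]
    exact ⟨by rw [degree_eq_natDegree hmonic.ne_zero, hdeg], fun _ => ⟨hmonic, hdeg⟩⟩

lemma eval_dickson11 (u : Rˣ) (n : ℕ) :
    (dickson 1 (1 : R) n).eval ((u : R) + ((u⁻¹ : Rˣ) : R)) =
      (u : R) ^ n + ((u⁻¹ : Rˣ) : R) ^ n :=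
  dickson_one_one_eval_add_inv _ _ (u.mul_inv) n

lemma eval_dickson21 (u : Rˣ) :
    ∀ n, ((u : R) - ((u⁻¹ : Rˣ) : R)) *
        (dickson 2 (1 : R) n).eval ((u : R) + ((u⁻¹ : Rˣ) : R)) =
      (u : R) ^ (n + 1) - ((u⁻¹ : Rˣ) : R) ^ (n + 1)
  | 0 => by norm_num [dickson_zero]
  | 1 => by simp only [dickson_one, eval_X]; ring
  | n + 2 => by
    have h := u.mul_inv
    have h1 := eval_dickson21 u n
    have h2 := eval_dickson21 u (n + 1)
    simp only [dickson_add_two, eval_sub, eval_mul, eval_X, C_1, eval_one, one_mul] at *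
    set v := ((u⁻¹ : Rˣ) : R)
    set w := (u : R)
    linear_combination (w + v) * h2 - h1 + (w ^ (n + 1) - v ^ (n + 1)) * h

@[to_additive]
lemma prod_pairs {M : Type*} [CommMonoid M] {m : ℕ} (f : Fin m × Fin m → M) :
    ∏ p ∈ Finset.univ.filter (fun p : Fin m × Fin m => p.1 < p.2), f p =
      ∏ i, ∏ j ∈ Finset.Ioi i, f (i, j) := by
  rw [Finset.prod_filter, ← Finset.univ_product_univ, Finset.prod_product]
  refine Finset.prod_congr rfl fun i _ => ?_
  rw [← Finset.prod_filter]
  congr 1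
  exact Finset.filter_lt_eq_Ioi

lemma prod_le_split {M : Type*} [CommMonoid M] {m : ℕ} (f : Fin m × Fin m → M) :
    ∏ p ∈ Finset.univ.filter (fun p : Fin m × Fin m => p.1 ≤ p.2), f p =
      (∏ p ∈ Finset.univ.filter (fun p : Fin m × Fin m => p.1 < p.2), f p) *
        ∏ i, f (i, i) := by
  classical
  have hsplit : Finset.univ.filter (fun p : Fin m × Fin m => p.1 ≤ p.2) =
      Finset.univ.filter (fun p => p.1 < p.2) ∪ Finset.univ.filter (fun p => p.1 = p.2) := by
    rw [← Finset.filter_or]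
    refine Finset.filter_congr fun p _ => ?_
    constructor
    · intro h; exact h.lt_or_eq
    · rintro (h | h); exacts [le_of_lt h, le_of_eq h]
  have hdisj : Disjoint (Finset.univ.filter (fun p : Fin m × Fin m => p.1 < p.2))
      (Finset.univ.filter (fun p : Fin m × Fin m => p.1 = p.2)) := by
    rw [Finset.disjoint_left]
    intro p hp hq
    simp only [Finset.mem_filter] at hp hq
    exact absurd hq.2 (ne_of_lt hp.2)
  have hdiag : Finset.univ.filter (fun p : Fin m × Fin m => p.1 = p.2) =
      Finset.univ.image (fun i => (i, i)) := by
    ext p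
    simp only [Finset.mem_filter, Finset.mem_image, Finset.mem_univ, true_and]
    constructor
    · intro h; exact ⟨p.1, Prod.ext rfl h⟩
    · rintro ⟨i, rfl⟩; rfl
  rw [hsplit, Finset.prod_union hdisj, hdiag,
    Finset.prod_image (fun i _ j _ h => (Prod.ext_iff.mp h).1)]

lemma dickson21_zero_eq_one : (dickson 2 (1 : R) 0) = 1 := by
  rw [dickson_zero]; norm_num

lemma detM_generic [Nontrivial R] {m : ℕ} (u : Fin m → Rˣ) :
    (Matrix.of fun i j : Fin m => if (j : ℕ) = 0 then (1 : R)
      else (u i : R) ^ (j : ℕ) + (((u i)⁻¹ : Rˣ) : R) ^ (j : ℕ)).det =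
    ∏ p ∈ Finset.univ.filter (fun p : Fin m × Fin m => p.1 < p.2),
      (((u p.2 : R) + (((u p.2)⁻¹ : Rˣ) : R)) - ((u p.1 : R) + (((u p.1)⁻¹ : Rˣ) : R))) := by
  set v : Fin m → R := fun i => (u i : R) + (((u i)⁻¹ : Rˣ) : R) with hv
  set q : Fin m → R[X] := fun j => if (j : ℕ) = 0 then 1 else dickson 1 1 (j : ℕ) with hq
  have h_deg : ∀ j : Fin m, (q j).natDegree = j := by
    intro j
    by_cases h : (j : ℕ) = 0
    · simp [hq, h]
    · simp only [hq, if_neg h]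
      exact ((dickson_deg' 1 (1 : R) j).2 h).2
  have h_monic : ∀ j : Fin m, (q j).Monic := by
    intro j
    by_cases h : (j : ℕ) = 0
    · simp [hq, h, monic_one]
    · simp only [hq, if_neg h]
      exact ((dickson_deg' 1 (1 : R) j).2 h).1
  have hmat : (Matrix.of fun i j : Fin m => if (j : ℕ) = 0 then (1 : R)
      else (u i : R) ^ (j : ℕ) + (((u i)⁻¹ : Rˣ) : R) ^ (j : ℕ)) =
      Matrix.of (fun i j => (q j).eval (v i)) := by
    ext i j
    by_cases h : (j : ℕ) = 0
    · simp [hq, h]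
    · simp only [Matrix.of_apply, hq, if_neg h]
      rw [eval_dickson11]
  rw [hmat, ← Matrix.det_eval_matrixOfPolynomials_eq_det_vandermonde v q h_deg h_monic,
    Matrix.det_vandermonde, prod_pairs]

lemma detN_generic [Nontrivial R] {m : ℕ} (u : Fin m → Rˣ) :
    (Matrix.of fun i j : Fin m =>
        (u i : R) ^ ((j : ℕ) + 1) - (((u i)⁻¹ : Rˣ) : R) ^ ((j : ℕ) + 1)).det =
    (∏ i, ((u i : R) - (((u i)⁻¹ : Rˣ) : R))) *
    ∏ p ∈ Finset.univ.filter (fun p : Fin m × Fin m => p.1 < p.2),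
      (((u p.2 : R) + (((u p.2)⁻¹ : Rˣ) : R)) - ((u p.1 : R) + (((u p.1)⁻¹ : Rˣ) : R))) := by
  set v : Fin m → R := fun i => (u i : R) + (((u i)⁻¹ : Rˣ) : R) with hv
  set q : Fin m → R[X] := fun j => dickson 2 (1 : R) (j : ℕ) with hq
  have h_deg : ∀ j : Fin m, (q j).natDegree = j := by
    intro j
    by_cases h : (j : ℕ) = 0
    · have h1 : q j = 1 := by rw [hq]; dsimp only; rw [h]; exact dickson21_zero_eq_one
      simp [h1, h]
    · exact ((dickson_deg' 2 (1 : R) j).2 h).2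
  have h_monic : ∀ j : Fin m, (q j).Monic := by
    intro j
    by_cases h : (j : ℕ) = 0
    · have h1 : q j = 1 := by rw [hq]; dsimp only; rw [h]; exact dickson21_zero_eq_one
      rw [h1]; exact monic_one
    · exact ((dickson_deg' 2 (1 : R) j).2 h).1
  have hmat : (Matrix.of fun i j : Fin m =>
      (u i : R) ^ ((j : ℕ) + 1) - (((u i)⁻¹ : Rˣ) : R) ^ ((j : ℕ) + 1)) =
      Matrix.of (fun i j : Fin m =>
        ((u i : R) - (((u i)⁻¹ : Rˣ) : R)) * (q j).eval (v i)) := by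
    ext i j
    simp only [Matrix.of_apply, hq]
    rw [eval_dickson21]
  rw [hmat]
  rw [show (Matrix.of (fun i j : Fin m =>
        ((u i : R) - (((u i)⁻¹ : Rˣ) : R)) * (q j).eval (v i))) =
      Matrix.of (fun i j : Fin m =>
        (fun i => ((u i : R) - (((u i)⁻¹ : Rˣ) : R))) i *
          (Matrix.of (fun i j => (q j).eval (v i))) i j) from rfl]
  rw [Matrix.det_mul_column, ← Matrix.det_eval_matrixOfPolynomials_eq_det_vandermonde v q
    h_deg h_monic, Matrix.det_vandermonde, prod_pairs]

end DetAux

section Assembly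
variable {m : ℕ}

def xu (i : Fin m) : (LZ m)ˣ := Em m (Multiplicative.ofAdd (eps i))

lemma xu_val (i : Fin m) : ((xu i : (LZ m)ˣ) : LZ m) = XZ (eps i) := rfl

lemma xu_inv_val (i : Fin m) : (((xu i)⁻¹ : (LZ m)ˣ) : LZ m) = XZ (-(eps i)) := by
  have : (xu i)⁻¹ = Em m (Multiplicative.ofAdd (-(eps i))) := by
    rw [xu, ← map_inv]; rfl
  rw [this]; rfl

lemma XZ_add_nat (c : ℤ) (j : ℕ) (i : Fin m) :
    XZ ((c + (j : ℤ)) • eps i) = XZ (c • eps i) * ((xu i : (LZ m)ˣ) : LZ m) ^ j := by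
  rw [add_smul, XZ_add]
  congr 1
  rw [XZ_smul, zpow_natCast, Units.val_pow_eq_pow_val]
  rfl

lemma XZ_sub_nat (c : ℤ) (j : ℕ) (i : Fin m) :
    XZ ((c - (j : ℤ)) • eps i) = XZ (c • eps i) * (((xu i)⁻¹ : (LZ m)ˣ) : LZ m) ^ j := by
  rw [sub_eq_add_neg, add_smul, XZ_add]
  congr 1
  rw [XZ_smul, zpow_neg, zpow_natCast, ← inv_pow, Units.val_pow_eq_pow_val]
  rfl

lemma pair_id (i j : Fin m) :
    (1 - XZ (eps i - eps j)) * (1 - XZ (-(eps i + eps j))) * XZ (eps j) =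
      (XZ (eps j) + XZ (-(eps j))) - (XZ (eps i) + XZ (-(eps i))) := by
  have hAC : XZ (eps i - eps j) * XZ (eps j) = XZ (eps i) := by
    rw [← XZ_add]; congr 1; abel
  have hBC : XZ (-(eps i + eps j)) * XZ (eps j) = XZ (-(eps i)) := by
    rw [← XZ_add]; congr 1; abel
  have hABC : XZ (eps i - eps j) * (XZ (-(eps i + eps j)) * XZ (eps j)) = XZ (-(eps j)) := by
    rw [hBC, ← XZ_add]; congr 1; abel
  calc (1 - XZ (eps i - eps j)) * (1 - XZ (-(eps i + eps j))) * XZ (eps j)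
      = XZ (eps j) - XZ (eps i - eps j) * XZ (eps j) -
        XZ (-(eps i + eps j)) * XZ (eps j) +
        XZ (eps i - eps j) * (XZ (-(eps i + eps j)) * XZ (eps j)) := by ring
    _ = _ := by rw [hABC, hAC, hBC]; ring

lemma diag_id (i : Fin m) :
    (1 - XZ (-(eps i + eps i))) * XZ (eps i) = XZ (eps i) - XZ (-(eps i)) := by
  have h : XZ (-(eps i + eps i)) * XZ (eps i) = XZ (-(eps i)) := by
    rw [← XZ_add]; congr 1; abel
  calc (1 - XZ (-(eps i + eps i))) * XZ (eps i)
      = XZ (eps i) - XZ (-(eps i + eps i)) * XZ (eps i) := by ring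
    _ = _ := by rw [h]

lemma sum_smul_eps (b : Wt m) : (∑ i, b i • eps i) = b := by
  funext k
  rw [Finset.sum_apply]
  simp [eps, Finset.sum_ite_eq, mul_ite]

/-- the weight `(0, 1, 2, ..., m-1)` -/
def deltaW (m : ℕ) : Wt m := fun i => ((i : ℕ) : ℤ)

lemma delta_eq :
    (∑ p ∈ Finset.univ.filter (fun p : Fin m × Fin m => p.1 < p.2), eps p.2) = deltaW m := by
  funext k
  rw [Finset.sum_apply, sum_pairs (f := fun p : Fin m × Fin m => eps p.2 k)]
  have inner : ∀ i : Fin m, ∑ j ∈ Finset.Ioi i, eps j k = if i < k then 1 else 0 := by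
    intro i
    simp only [eps]
    rw [Finset.sum_ite_eq (Finset.Ioi i) k (fun _ => (1 : ℤ))]
    simp [Finset.mem_Ioi]
  simp only [inner]
  have : ∑ i : Fin m, (if i < k then (1 : ℤ) else 0) =
      ((Finset.univ.filter (fun i : Fin m => i < k)).card : ℤ) := by
    simp [Finset.sum_ite_eq, Finset.sum_boole]
  rw [this, Finset.filter_gt_eq_Iio, Fin.card_Iio]
  rfl

lemma yy_prod_small :
    ∏ p ∈ Finset.univ.filter (fun p : Fin m × Fin m => p.1 < p.2),
      ((XZ (eps p.2) + XZ (-(eps p.2))) - (XZ (eps p.1) + XZ (-(eps p.1)))) =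
    phiSmall m * XZ (deltaW m) := by
  rw [phiSmall, ← delta_eq, XZ_sum, mul_assoc, ← Finset.prod_mul_distrib,
    ← Finset.prod_mul_distrib]
  exact Finset.prod_congr rfl fun p _ =>
    ((mul_assoc _ _ _).symm.trans (pair_id p.1 p.2)).symm

lemma yy_prod_big :
    (∏ i, (XZ (eps i) - XZ (-(eps i)))) *
    ∏ p ∈ Finset.univ.filter (fun p : Fin m × Fin m => p.1 < p.2),
      ((XZ (eps p.2) + XZ (-(eps p.2))) - (XZ (eps p.1) + XZ (-(eps p.1)))) =
    phiBig m * (XZ (deltaW m) * ∏ i, XZ (eps i)) := by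
  have hdiag : (∏ i : Fin m, (1 - XZ (-(eps i + eps i)))) * ∏ i : Fin m, XZ (eps i) =
      ∏ i : Fin m, (XZ (eps i) - XZ (-(eps i))) := by
    rw [← Finset.prod_mul_distrib]
    exact Finset.prod_congr rfl fun i _ => diag_id i
  rw [← hdiag, yy_prod_small, phiBig, phiSmall,
    prod_le_split (m := m) (fun p : Fin m × Fin m => (1 - XZ (-(eps p.1 + eps p.2))))]
  ring

end Assembly

/-- The two determinantal factorizations `det M = φ_m · x^α` and
`det N = Φ_m · x^α` in the Laurent polynomial ring `ℤ[x_1^{±1}, …, x_m^{±1}]`.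
Here `x_i^a` is the monomial `XZ (a • eps i)`. -/
theorem stmt0 (m : ℕ) (hm : 1 ≤ m) (α : Wt m) :
    (Matrix.det (Matrix.of fun i j : Fin m =>
        if (j : ℕ) = 0 then XZ ((α i - (i : ℕ)) • eps i)
        else XZ ((α i - (i : ℕ) + (j : ℕ)) • eps i) +
             XZ ((α i - (i : ℕ) - (j : ℕ)) • eps i)) =
      phiSmall m * XZ α) ∧
    (Matrix.det (Matrix.of fun i j : Fin m =>
        XZ ((α i - (i : ℕ) + (j : ℕ)) • eps i) -
        XZ ((α i - (i : ℕ) - (j : ℕ) - 2) • eps i)) =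
      phiBig m * XZ α) := by
  constructor
  · -- small case
    have hM : (Matrix.of fun i j : Fin m =>
        if (j : ℕ) = 0 then XZ ((α i - (i : ℕ)) • eps i)
        else XZ ((α i - (i : ℕ) + (j : ℕ)) • eps i) +
             XZ ((α i - (i : ℕ) - (j : ℕ)) • eps i)) =
        Matrix.of (fun i j : Fin m => (fun i : Fin m => XZ ((α i - (i : ℕ)) • eps i)) i *
          (Matrix.of fun i j : Fin m => if (j : ℕ) = 0 then (1 : LZ m)
            else ((xu i : (LZ m)ˣ) : LZ m) ^ (j : ℕ) +
              (((xu i)⁻¹ : (LZ m)ˣ) : LZ m) ^ (j : ℕ)) i j) := by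
      ext i j
      by_cases h : (j : ℕ) = 0
      · simp [h]
      · simp only [Matrix.of_apply, if_neg h]
        rw [mul_add, ← XZ_add_nat, ← XZ_sub_nat]
    rw [hM, Matrix.det_mul_column, detM_generic]
    simp only [xu_val, xu_inv_val]
    rw [yy_prod_small, ← XZ_sum, mul_left_comm, ← XZ_add]
    congr 1
    have hb := sum_smul_eps (m := m) (fun i => α i - ((i : ℕ) : ℤ))
    rw [hb]
    refine congrArg XZ ?_
    funext k
    simp [deltaW]
  · -- big case
    have hN : (Matrix.of fun i j : Fin m =>
        XZ ((α i - (i : ℕ) + (j : ℕ)) • eps i) -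
        XZ ((α i - (i : ℕ) - (j : ℕ) - 2) • eps i)) =
        Matrix.of (fun i j : Fin m =>
          (fun i : Fin m => XZ ((α i - (i : ℕ) - 1) • eps i)) i *
          (Matrix.of fun i j : Fin m =>
            ((xu i : (LZ m)ˣ) : LZ m) ^ ((j : ℕ) + 1) -
              (((xu i)⁻¹ : (LZ m)ˣ) : LZ m) ^ ((j : ℕ) + 1)) i j) := by
      ext i j
      simp only [Matrix.of_apply]
      have e1 : (α i - ((i : ℕ) : ℤ) + ((j : ℕ) : ℤ)) =
          (α i - ((i : ℕ) : ℤ) - 1) + ((((j : ℕ) + 1 : ℕ)) : ℤ) := by push_cast; ring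
      have e2 : (α i - ((i : ℕ) : ℤ) - ((j : ℕ) : ℤ) - 2) =
          (α i - ((i : ℕ) : ℤ) - 1) - ((((j : ℕ) + 1 : ℕ)) : ℤ) := by push_cast; ring
      rw [e1, e2, XZ_add_nat, XZ_sub_nat, ← mul_sub]
    rw [hN, Matrix.det_mul_column, detN_generic]
    simp only [xu_val, xu_inv_val]
    rw [yy_prod_big, ← XZ_sum, ← XZ_sum, mul_left_comm, ← XZ_add, ← XZ_add]
    congr 1
    have hb := sum_smul_eps (m := m) (fun i => α i - ((i : ℕ) : ℤ) - 1)
    rw [hb]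
    refine congrArg XZ ?_
    funext k
    rw [Pi.add_apply, Pi.add_apply, Finset.sum_apply]
    simp [deltaW, eps, Finset.sum_ite_eq]

end
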